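/- Let M : Matrix (Fin n) (Fin m) ℝ be a zero-sum game and S_M its von Neumann symmetrisation. Fix t : ℝ. Suppose x1 : ℝ → Fin n → ℝ and x2 : ℝ → Fin m → ℝ satisfy, at time t: ∑ s, x1 t s = 1, ∑ r, x2 t r = 1, and the non-symmetric replicator equations hold at t, i.e. for every s : Fin n, HasDerivAt (fun τ => x1 τ s) (x1 t s * ((M.mulVec (x2 t)) s - x1 t ⬝ᵥ M.mulVec (x2 t))) t, and for every r : Fin m, HasDerivAt (fun τ => x2 τ r) (-(x2 t r) * ((Mᵀ.mulVec (x1 t)) r - x1 t ⬝ᵥ M.mulVec (x2 t))) t. Define x : Fin n × Fin m → ℝ by x q = x1 t q.1 * x2 t q.2. Then for every profile p : Fin n × Fin m, HasDerivAt (fun τ => x1 τ p.1 * x2 τ p.2) (x p * (S_M.mulVec x) p) t. (Symmetrising the replicator dynamic: the flow of the non-symmetric replicator on M embeds, on the subspace of product distributions, into the flow of the symmetric replicator on S_M.) -/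

import Mathlib

open Matrix

/-- The von Neumann symmetrisation of a zero-sum game `M`:
`(S_M) p q = M p.1 q.2 − M q.1 p.2`. -/
def vonNeumannSym {n m : ℕ} (M : Matrix (Fin n) (Fin m) ℝ) :
    Matrix (Fin n × Fin m) (Fin n × Fin m) ℝ :=
  fun p q => M p.1 q.2 - M q.1 p.2

/-- Symmetrising the replicator dynamic: on the subspace of product distributions,
the non-symmetric replicator flow on `M` embeds in the symmetric replicator flow
on the von Neumann symmetrisation of `M`. -/
theorem symmetrising_replicator {n m : ℕ} (M : Matrix (Fin n) (Fin m) ℝ)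
    (t : ℝ) (x1 : ℝ → Fin n → ℝ) (x2 : ℝ → Fin m → ℝ)
    (hsum1 : ∑ s, x1 t s = 1) (hsum2 : ∑ r, x2 t r = 1)
    (hrep1 : ∀ s : Fin n, HasDerivAt (fun τ => x1 τ s)
      (x1 t s * ((M.mulVec (x2 t)) s - x1 t ⬝ᵥ M.mulVec (x2 t))) t)
    (hrep2 : ∀ r : Fin m, HasDerivAt (fun τ => x2 τ r)
      (-(x2 t r) * ((Mᵀ.mulVec (x1 t)) r - x1 t ⬝ᵥ M.mulVec (x2 t))) t)
    (x : Fin n × Fin m → ℝ) (hx : ∀ q : Fin n × Fin m, x q = x1 t q.1 * x2 t q.2) :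
    ∀ p : Fin n × Fin m,
      HasDerivAt (fun τ => x1 τ p.1 * x2 τ p.2)
        (x p * ((vonNeumannSym M).mulVec x) p) t := by
  intro p
  have h := (hrep1 p.1).mul (hrep2 p.2)
  convert h using 1
  case e'_4 => rfl
  case e'_5 => rfl
  case e'_8 => rfl
  have key : ((vonNeumannSym M).mulVec x) p
      = (M.mulVec (x2 t)) p.1 - (Mᵀ.mulVec (x1 t)) p.2 := by
    simp only [vonNeumannSym, mulVec, dotProduct, transpose_apply]
    simp only [hx, Fintype.sum_prod_type]
    rw [show (∑ s, ∑ r, (M p.1 r - M s p.2) * (x1 t s * x2 t r))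
        = (∑ s, x1 t s) * (∑ r, M p.1 r * x2 t r)
          - (∑ s, M s p.2 * x1 t s) * (∑ r, x2 t r) by
      rw [Finset.sum_mul, Finset.sum_mul]
      rw [← Finset.sum_sub_distrib]
      refine Finset.sum_congr rfl fun s _ => ?_
      rw [Finset.mul_sum, Finset.mul_sum, ← Finset.sum_sub_distrib]
      refine Finset.sum_congr rfl fun r _ => ?_
      ring]
    rw [hsum1, hsum2]
    ring
  rw [hx, key]
  ring
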